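/- Fix q̂ ∈ (0,1). The function y ↦ M(3/2 − y·i) is strictly decreasing on the interval [√3/2, 2/q̂). -/

import Mathlib

open Complex

/-- The real part of the steepest-descent phase function `h₀` of half-space geometric LPP:
`M(w) = log|1−q̂/w| − log|1−q̂w| − (2q̂/(1−q̂))·log|w|`. -/
noncomputable def phaseRe (qh : ℝ) (w : ℂ) : ℝ :=
  Real.log (‖1 - (qh : ℂ) / w‖) - Real.log (‖1 - (qh : ℂ) * w‖) -
    (2 * qh / (1 - qh)) * Real.log (‖w‖)

noncomputable def gphase (qh : ℝ) (y : ℝ) : ℝ :=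
  Real.log ((3/2 - qh)^2 + y^2) / 2 - Real.log ((1 - 3/2*qh)^2 + qh^2*y^2) / 2
    - ((1+qh)/(2*(1-qh))) * Real.log (9/4 + y^2)

lemma log_abs_eq (z : ℂ) : Real.log (‖z‖) = Real.log (Complex.normSq z) / 2 := by
  rw [Complex.norm_def, Real.log_sqrt (Complex.normSq_nonneg z)]

lemma gphase_hasDerivAt (qh : ℝ) (hq0 : 0 < qh) (y : ℝ) (hy : 0 < y) :
    HasDerivAt (gphase qh)
      (2*y/((3/2 - qh)^2 + y^2)/2 - qh^2*(2*y)/((1 - 3/2*qh)^2 + qh^2*y^2)/2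
        - ((1+qh)/(2*(1-qh))) * (2*y/(9/4 + y^2))) y := by
  have hApos : (0:ℝ) < (3/2 - qh)^2 + y^2 := by positivity
  have hBpos : (0:ℝ) < (1 - 3/2*qh)^2 + qh^2*y^2 := by positivity
  have hCpos : (0:ℝ) < 9/4 + y^2 := by positivity
  have h1 : HasDerivAt (fun t : ℝ => (3/2 - qh)^2 + t^2) (2*y) y := by
    simpa using (hasDerivAt_pow 2 y).const_add ((3/2 - qh)^2)
  have h2 : HasDerivAt (fun t : ℝ => (1 - 3/2*qh)^2 + qh^2*t^2) (qh^2*(2*y)) y := by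
    simpa using ((hasDerivAt_pow 2 y).const_mul (qh^2)).const_add ((1 - 3/2*qh)^2)
  have h3 : HasDerivAt (fun t : ℝ => 9/4 + t^2) (2*y) y := by
    simpa using (hasDerivAt_pow 2 y).const_add (9/4 : ℝ)
  have := (((h1.log hApos.ne').div_const 2).sub ((h2.log hBpos.ne').div_const 2)).sub
    ((h3.log hCpos.ne').const_mul ((1+qh)/(2*(1-qh))))
  exact this

lemma gderiv_neg (qh : ℝ) (hq0 : 0 < qh) (hq1 : qh < 1) (y : ℝ) (hy : 0 < y) :
    2*y/((3/2 - qh)^2 + y^2)/2 - qh^2*(2*y)/((1 - 3/2*qh)^2 + qh^2*y^2)/2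
        - ((1+qh)/(2*(1-qh))) * (2*y/(9/4 + y^2)) < 0 := by
  have hApos : (0:ℝ) < (3/2 - qh)^2 + y^2 := by positivity
  have hBpos : (0:ℝ) < (1 - 3/2*qh)^2 + qh^2*y^2 := by positivity
  have hCpos : (0:ℝ) < 9/4 + y^2 := by positivity
  have h1q : (0:ℝ) < 1 - qh := by linarith
  have e1 : 2*y/((3/2 - qh)^2 + y^2)/2 = y/((3/2 - qh)^2 + y^2) := by ring
  have e2 : qh^2*(2*y)/((1 - 3/2*qh)^2 + qh^2*y^2)/2 = qh^2*y/((1 - 3/2*qh)^2 + qh^2*y^2) := by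
    ring
  have e3 : ((1+qh)/(2*(1-qh))) * (2*y/(9/4 + y^2)) = (1+qh)*y/((1-qh)*(9/4 + y^2)) := by
    field_simp
  rw [e1, e2, e3]
  have h4 : y/((3/2 - qh)^2 + y^2) < (1+qh)*y/((1-qh)*(9/4 + y^2)) := by
    rw [div_lt_div_iff₀ hApos (mul_pos h1q hCpos)]
    nlinarith [mul_pos hy hq0, mul_nonneg (mul_pos hy hq0).le (sq_nonneg (1-qh)),
      mul_nonneg (mul_pos hy hq0).le (sq_nonneg y)]
  have h5 : 0 < qh^2*y/((1 - 3/2*qh)^2 + qh^2*y^2) := by positivity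
  linarith

lemma gphase_anti (qh : ℝ) (hq0 : 0 < qh) (hq1 : qh < 1) :
    StrictAntiOn (gphase qh) (Set.Ico (Real.sqrt 3 / 2) (2 / qh)) := by
  have hs : (0:ℝ) < Real.sqrt 3 / 2 := by positivity
  apply strictAntiOn_of_deriv_neg (convex_Ico _ _)
  · intro y hy
    have hy0 : 0 < y := lt_of_lt_of_le hs hy.1
    exact (gphase_hasDerivAt qh hq0 y hy0).continuousAt.continuousWithinAt
  · rw [interior_Ico]
    intro y hy
    have hy0 : 0 < y := lt_trans hs hy.1
    rw [(gphase_hasDerivAt qh hq0 y hy0).deriv]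
    exact gderiv_neg qh hq0 hq1 y hy0

lemma phaseRe_eq (qh : ℝ) (hq0 : 0 < qh) (hq1 : qh < 1) (y : ℝ) (hy : 0 < y) :
    phaseRe qh (3 / 2 - (y : ℂ) * Complex.I) = gphase qh y := by
  set w : ℂ := 3 / 2 - (y : ℂ) * Complex.I with hw
  have hnsw : Complex.normSq w = 9/4 + y^2 := by
    simp [hw, Complex.normSq_apply]; ring
  have hns1 : Complex.normSq (w - qh) = (3/2 - qh)^2 + y^2 := by
    simp [hw, Complex.normSq_apply]; ring
  have hns2 : Complex.normSq (1 - qh*w) = (1 - 3/2*qh)^2 + qh^2*y^2 := by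
    simp [hw, Complex.normSq_apply]; ring
  have hCpos : (0:ℝ) < 9/4 + y^2 := by positivity
  have hApos : (0:ℝ) < (3/2 - qh)^2 + y^2 := by positivity
  have hBpos : (0:ℝ) < (1 - 3/2*qh)^2 + qh^2*y^2 := by positivity
  have hw0 : w ≠ 0 := by
    intro h; rw [h] at hnsw; simp at hnsw; nlinarith
  have hwq : w - qh ≠ 0 := by
    intro h; rw [h] at hns1; simp at hns1; nlinarith
  have h1qw : (1:ℂ) - qh*w ≠ 0 := by
    intro h; rw [h] at hns2; simp at hns2; nlinarith
  have hdiv : (1:ℂ) - (qh:ℂ)/w = (w - qh)/w := by field_simp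
  rw [phaseRe, hdiv, norm_div,
    Real.log_div (norm_ne_zero_iff.mpr hwq) (norm_ne_zero_iff.mpr hw0),
    log_abs_eq, log_abs_eq, log_abs_eq, hnsw, hns1, hns2, gphase]
  have h1q : (1:ℝ) - qh ≠ 0 := by linarith
  field_simp
  ring

/-- **Steepest descent along the vertical segment `τ₂`.** The map
`y ↦ M(3/2 − y·i)` is strictly decreasing on `[√3/2, 2/q̂)`. -/
theorem phaseRe_strictAntiOn_tau2 (qh : ℝ) (hq : qh ∈ Set.Ioo (0 : ℝ) 1) :
    StrictAntiOn (fun y : ℝ => phaseRe qh (3 / 2 - (y : ℂ) * Complex.I))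
      (Set.Ico (Real.sqrt 3 / 2) (2 / qh)) := by
  obtain ⟨hq0, hq1⟩ := hq
  have hs : (0:ℝ) < Real.sqrt 3 / 2 := by positivity
  intro x hx y hy hxy
  have hx0 : 0 < x := lt_of_lt_of_le hs hx.1
  have hy0 : 0 < y := lt_of_lt_of_le hs hy.1
  simp only
  rw [phaseRe_eq qh hq0 hq1 x hx0, phaseRe_eq qh hq0 hq1 y hy0]
  exact gphase_anti qh hq0 hq1 hx hy hxy
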